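/- Define a : ℕ → ℚ by a(n) = 2·3^n·(2n)! / (n!·(n+2)!), the number of rooted planar maps with n edges (so a(0)=1, a(1)=2, a(2)=9, a(3)=54, …), and let A = ∑_{n≥0} a(n)·X^n ∈ ℚ⟦X⟧. Then (1 − 18·X + 54·X²·A)² = (1 − 12·X)³ in ℚ⟦X⟧; equivalently, A is the power series expansion of (−1 + 18z + (1 − 12z)^{3/2})/(54z²). -/

import Mathlib

open PowerSeries

lemma arec (a : ℕ → ℚ)
    (ha : ∀ n : ℕ, a n =
      2 * 3 ^ n * ((2 * n).factorial : ℚ) / ((n.factorial : ℚ) * ((n + 2).factorial : ℚ))) :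
    ∀ n : ℕ, ((n : ℚ) + 3) * a (n + 1) = 6 * (2 * n + 1) * a n := by
  intro n
  rw [ha, ha]
  have e1 : (2*(n+1)).factorial = (2*n+2) * ((2*n+1) * (2*n).factorial) := by
    rw [show 2*(n+1) = (2*n+1)+1 by ring, Nat.factorial_succ, Nat.factorial_succ]
  have e2 : (n+1).factorial = (n+1) * n.factorial := Nat.factorial_succ n
  have e3 : (n+1+2).factorial = (n+3) * (n+2).factorial := by
    rw [show n+1+2 = (n+2)+1 by ring, Nat.factorial_succ]
  rw [e1, e2, e3]
  have h1 : (n.factorial : ℚ) ≠ 0 := Nat.cast_ne_zero.mpr n.factorial_ne_zero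
  have h2 : ((n+2).factorial : ℚ) ≠ 0 := Nat.cast_ne_zero.mpr (n+2).factorial_ne_zero
  have h3 : ((2*n).factorial : ℚ) ≠ 0 := Nat.cast_ne_zero.mpr (2*n).factorial_ne_zero
  have h4 : (n : ℚ) + 1 ≠ 0 := by positivity
  have h5 : (n : ℚ) + 3 ≠ 0 := by positivity
  push_cast
  field_simp
  ring

theorem stmt5 (a : ℕ → ℚ)
    (ha : ∀ n : ℕ, a n =
      2 * 3 ^ n * ((2 * n).factorial : ℚ) / ((n.factorial : ℚ) * ((n + 2).factorial : ℚ))) :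
    (1 - 18 * PowerSeries.X + 54 * PowerSeries.X ^ 2 * PowerSeries.mk a) ^ 2 =
      (1 - 12 * (PowerSeries.X : PowerSeries ℚ)) ^ 3 := by
  set B : ℚ⟦X⟧ := 1 - 18 * PowerSeries.X + 54 * PowerSeries.X ^ 2 * PowerSeries.mk a with hB
  set W : ℚ⟦X⟧ := 1 - PowerSeries.C (R := ℚ) 12 * PowerSeries.X with hW
  have c12 : (12 : ℚ⟦X⟧) = PowerSeries.C (R := ℚ) 12 := (map_ofNat (C (R := ℚ)) 12).symm
  have hWeq : (1 - 12 * (PowerSeries.X : ℚ⟦X⟧)) = W := by rw [hW, c12]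
  rw [hWeq]
  -- rewrite B with explicit C-constants
  have hBC : B = 1 - PowerSeries.C (R := ℚ) 18 * PowerSeries.X
      + PowerSeries.C (R := ℚ) 54 * (PowerSeries.X ^ 2 * PowerSeries.mk a) := by
    rw [hB, ← map_ofNat (C (R := ℚ)) 18, ← map_ofNat (C (R := ℚ)) 54]; ring
  -- coefficients of B
  have hc0 : coeff (R := ℚ) 0 B = 1 := by
    rw [hBC]; simp
  have hc1 : coeff (R := ℚ) 1 B = -18 := by
    rw [hBC]; simp [coeff_C_mul, coeff_one, coeff_X, coeff_X_pow_mul']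
  have hc2 : ∀ n : ℕ, coeff (R := ℚ) (n + 2) B = 54 * a n := by
    intro n
    rw [hBC]
    simp only [map_add, map_sub, coeff_C_mul, coeff_X_pow_mul, coeff_mk, coeff_one, coeff_X]
    norm_num
    omega
  -- generic coefficient of (1 - 12X) * y'
  have cXd : ∀ (y : ℚ⟦X⟧) (n : ℕ), coeff (R := ℚ) n (W * d⁄dX ℚ y)
      = ((n : ℚ) + 1) * coeff (R := ℚ) (n + 1) y - 12 * n * coeff (R := ℚ) n y := by
    intro y n
    rw [hW, sub_mul, one_mul, map_sub,
      show PowerSeries.C (R := ℚ) 12 * PowerSeries.X * d⁄dX ℚ y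
        = PowerSeries.C (R := ℚ) 12 * (PowerSeries.X * d⁄dX ℚ y) by ring,
      coeff_C_mul, coeff_derivative]
    cases n with
    | zero =>
      rw [coeff_zero_eq_constantCoeff_apply]
      push_cast
      simp
    | succ m =>
      rw [coeff_succ_X_mul, coeff_derivative]
      push_cast
      ring
  -- extract coefficient recurrence from an ODE
  have keycoeff : ∀ (c : ℚ) (y : ℚ⟦X⟧), W * d⁄dX ℚ y = PowerSeries.C (R := ℚ) c * y →
      ∀ n : ℕ, ((n : ℚ) + 1) * coeff (R := ℚ) (n + 1) y = (12 * n + c) * coeff (R := ℚ) n y := by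
    intro c y h n
    have h' := congrArg (coeff (R := ℚ) n) h
    rw [cXd, coeff_C_mul] at h'
    linear_combination h'
  -- build an ODE from a coefficient recurrence
  have mk_ode : ∀ (c : ℚ) (y : ℚ⟦X⟧),
      (∀ n : ℕ, ((n : ℚ) + 1) * coeff (R := ℚ) (n + 1) y = (12 * n + c) * coeff (R := ℚ) n y) →
      W * d⁄dX ℚ y = PowerSeries.C (R := ℚ) c * y := by
    intro c y h
    ext n
    rw [cXd, coeff_C_mul]
    linear_combination h n
  -- B satisfies the coefficient recurrence with c = -18
  have hrec : ∀ n : ℕ, ((n : ℚ) + 1) * coeff (R := ℚ) (n + 1) B = (12 * n + (-18)) * coeff (R := ℚ) n B := by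
    intro n
    match n with
    | 0 => rw [show (0:ℕ)+1 = 1 from rfl, hc1, hc0]; norm_num
    | 1 => rw [show (1:ℕ)+1 = 0+2 from rfl, hc2 0, hc1, ha 0]; norm_num [Nat.factorial]
    | 2 =>
      rw [show (2:ℕ)+1 = 1+2 from rfl, hc2 1, show (2:ℕ) = 0+2 from rfl, hc2 0, ha 0, ha 1]
      norm_num [Nat.factorial]
    | (m+3) =>
      rw [show m+3+1 = (m+2)+2 from rfl, hc2 (m+2), show m+3 = (m+1)+2 from rfl, hc2 (m+1)]
      have h := arec a ha (m+1)
      push_cast at h ⊢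
      linear_combination (54 : ℚ) * h
  have hodeB : W * d⁄dX ℚ B = PowerSeries.C (R := ℚ) (-18) * B := mk_ode (-18) B hrec
  -- ODE for B^2
  have hode2 : W * d⁄dX ℚ (B ^ 2) = PowerSeries.C (R := ℚ) (-36) * B ^ 2 := by
    have hd : d⁄dX ℚ (B ^ 2) = 2 * (B * d⁄dX ℚ B) := by
      rw [pow_two, Derivation.leibniz, smul_eq_mul]; ring
    have h36 : PowerSeries.C (R := ℚ) (-36) = 2 * PowerSeries.C (R := ℚ) (-18) := by
      rw [← map_ofNat (C (R := ℚ)) 2, ← map_mul]; norm_num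
    rw [hd, h36]
    calc W * (2 * (B * d⁄dX ℚ B)) = 2 * (B * (W * d⁄dX ℚ B)) := by ring
      _ = 2 * (B * (PowerSeries.C (R := ℚ) (-18) * B)) := by rw [hodeB]
      _ = 2 * PowerSeries.C (R := ℚ) (-18) * B ^ 2 := by ring
  -- ODE for W^3
  have hdW : d⁄dX ℚ W = -(PowerSeries.C (R := ℚ) 12) := by
    rw [hW, map_sub, Derivation.map_one_eq_zero, Derivation.leibniz, derivative_X,
      derivative_C, smul_eq_mul, smul_eq_mul]
    ring
  have hodez : W * d⁄dX ℚ (W ^ 3) = PowerSeries.C (R := ℚ) (-36) * W ^ 3 := by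
    rw [Derivation.leibniz_pow, hdW]
    have h36 : PowerSeries.C (R := ℚ) (-36) = -(36 : ℚ⟦X⟧) := by
      rw [map_neg, map_ofNat]
    have h12' : -(PowerSeries.C (R := ℚ) 12) = -(12 : ℚ⟦X⟧) := by rw [c12]
    rw [h36, h12']
    simp only [smul_eq_mul, nsmul_eq_mul]
    push_cast
    ring
  -- conclude by uniqueness of coefficients
  have k1 := keycoeff (-36) (B ^ 2) hode2
  have k2 := keycoeff (-36) (W ^ 3) hodez
  have h0 : coeff (R := ℚ) 0 (B ^ 2) = coeff (R := ℚ) 0 (W ^ 3) := by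
    rw [coeff_zero_eq_constantCoeff_apply, coeff_zero_eq_constantCoeff_apply, hB, hW]
    simp
  ext n
  induction n with
  | zero => exact h0
  | succ m ih =>
    have e1 := k1 m
    have e2 := k2 m
    rw [ih] at e1
    have hne : ((m : ℚ) + 1) ≠ 0 := by positivity
    exact mul_left_cancel₀ hne (e1.trans e2.symm)
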